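/- Let g ∈ L²(0,∞) and for t ≥ 1 define E₊(z) = ∫_z^∞ e^{-its²/2} ds = t^{-1/2} E₊⁰(√t z), where E₊⁰(z) = ∫_z^∞ e^{-is²/2} ds. Then |∫_0^∞ g(z) E₊(z) dz| ≤ C ‖g‖_{L²} t^{-3/4} for an absolute constant C. -/

import Mathlib

open MeasureTheory Set Filter Complex

noncomputable section FresnelAux

private def phi (s : ℝ) : ℂ := Complex.exp (-Complex.I * (s : ℂ) ^ 2 / 2)

private lemma phi_cont : Continuous phi := by unfold phi; fun_prop

private lemma phi_intInt (a b : ℝ) : IntervalIntegrable phi volume a b :=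
  phi_cont.intervalIntegrable a b

private lemma phi_norm (s : ℝ) : ‖phi s‖ = 1 := by
  have h : -Complex.I * (s : ℂ) ^ 2 / 2 = ((-(s ^ 2) / 2 : ℝ) : ℂ) * Complex.I := by
    push_cast; ring
  rw [phi, h, Complex.norm_exp_ofReal_mul_I]

private lemma hasDeriv_aux {s : ℝ} (hs : s ≠ 0) :
    HasDerivAt (fun x : ℝ => Complex.I / (x : ℂ) * phi x)
      (phi s - Complex.I / (s : ℂ) ^ 2 * phi s) s := by
  have hsne : (s : ℂ) ≠ 0 := Complex.ofReal_ne_zero.2 hs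
  have h1 : HasDerivAt (fun w : ℂ => Complex.I / w) (-(Complex.I / (s : ℂ) ^ 2)) (s : ℂ) := by
    simpa [div_eq_mul_inv, mul_neg] using (hasDerivAt_inv hsne).const_mul Complex.I
  have h2 : HasDerivAt (fun w : ℂ => Complex.exp (-Complex.I * w ^ 2 / 2))
      (Complex.exp (-Complex.I * (s : ℂ) ^ 2 / 2) * (-Complex.I * (s : ℂ))) (s : ℂ) := by
    have hin : HasDerivAt (fun w : ℂ => -Complex.I * w ^ 2 / 2)
        (-Complex.I * (s : ℂ)) (s : ℂ) := by
      have := ((hasDerivAt_pow 2 ((s : ℂ))).const_mul (-Complex.I)).div_const 2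
      exact this.congr_deriv (by push_cast; ring)
    exact hin.cexp
  have h3 := (h1.mul h2).comp_ofReal
  convert h3 using 1
  · rfl
  unfold phi
  field_simp
  ring_nf
  rw [Complex.I_sq]
  ring

private lemma aux_norm {s : ℝ} (hs : 0 < s) : ‖Complex.I / (s : ℂ) * phi s‖ = 1 / s := by
  rw [norm_mul, phi_norm, mul_one, norm_div, Complex.norm_I, Complex.norm_real,
    Real.norm_of_nonneg hs.le]

private lemma partial_bound {z R : ℝ} (hz : 0 < z) (hR : z ≤ R) :
    ‖∫ s in z..R, phi s‖ ≤ 2 / z := by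
  have huIcc : uIcc z R = Icc z R := uIcc_of_le hR
  have hpos : ∀ s ∈ uIcc z R, 0 < s := by
    rw [huIcc]; intro s hs; exact lt_of_lt_of_le hz hs.1
  have hc2 : ContinuousOn (fun s : ℝ => Complex.I / (s : ℂ) ^ 2 * phi s) (uIcc z R) := by
    apply ContinuousOn.mul _ phi_cont.continuousOn
    exact continuousOn_const.div (Complex.continuous_ofReal.continuousOn.pow 2)
      (fun s hs => pow_ne_zero _ (Complex.ofReal_ne_zero.2 (hpos s hs).ne'))
  have hint2 : IntervalIntegrable (fun s : ℝ => Complex.I / (s : ℂ) ^ 2 * phi s) volume z R :=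
    hc2.intervalIntegrable
  have hderiv : ∀ s ∈ uIcc z R,
      HasDerivAt (fun x : ℝ => Complex.I / (x : ℂ) * phi x)
        (phi s - Complex.I / (s : ℂ) ^ 2 * phi s) s :=
    fun s hs => hasDeriv_aux (hpos s hs).ne'
  have key := intervalIntegral.integral_eq_sub_of_hasDerivAt hderiv
    ((phi_intInt z R).sub hint2)
  rw [intervalIntegral.integral_sub (phi_intInt z R) hint2] at key
  have key2 : (∫ s in z..R, phi s) =
      (Complex.I / (R : ℂ) * phi R - Complex.I / (z : ℂ) * phi z)
        + ∫ s in z..R, Complex.I / (s : ℂ) ^ 2 * phi s := by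
    rw [← key]; ring
  have hJ : ‖∫ s in z..R, Complex.I / (s : ℂ) ^ 2 * phi s‖ ≤ z⁻¹ - R⁻¹ := by
    calc ‖∫ s in z..R, Complex.I / (s : ℂ) ^ 2 * phi s‖
        ≤ ∫ s in z..R, ‖Complex.I / (s : ℂ) ^ 2 * phi s‖ :=
          intervalIntegral.norm_integral_le_integral_norm hR
      _ = ∫ s in z..R, (s : ℝ) ^ (-2 : ℤ) := by
          apply intervalIntegral.integral_congr
          intro s hs
          have hs0 : 0 < s := hpos s hs
          show ‖Complex.I / (s : ℂ) ^ 2 * phi s‖ = (s : ℝ) ^ (-2 : ℤ)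
          rw [norm_mul, phi_norm, mul_one, norm_div, Complex.norm_I, norm_pow,
            Complex.norm_real, Real.norm_of_nonneg hs0.le]
          rw [zpow_neg, one_div]
          norm_num
      _ = z⁻¹ - R⁻¹ := by
          rw [integral_zpow (Or.inr ⟨by norm_num, by
            rw [huIcc]; intro h; exact absurd (h.1) (not_le.2 hz)⟩)]
          norm_num
          ring
  calc ‖∫ s in z..R, phi s‖
      ≤ ‖Complex.I / (R : ℂ) * phi R‖ + ‖Complex.I / (z : ℂ) * phi z‖
        + ‖∫ s in z..R, Complex.I / (s : ℂ) ^ 2 * phi s‖ := by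
        rw [key2]
        exact (norm_add_le _ _).trans (by gcongr; exact norm_sub_le _ _)
    _ ≤ 1 / R + 1 / z + (z⁻¹ - R⁻¹) := by
        rw [aux_norm (lt_of_lt_of_le hz hR), aux_norm hz]
        gcongr
    _ = 2 / z := by field_simp; ring

private lemma E0_eq {E0 : ℝ → ℂ}
    (hE : ∀ z : ℝ, Tendsto (fun R : ℝ => ∫ s in z..R, phi s) atTop (nhds (E0 z))) (z : ℝ) :
    E0 z = (∫ s in z..(1 : ℝ), phi s) + E0 1 := by
  refine tendsto_nhds_unique (hE z) ?_
  have heq : (fun R : ℝ => ∫ s in z..R, phi s)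
      = fun R : ℝ => (∫ s in z..(1 : ℝ), phi s) + ∫ s in (1 : ℝ)..R, phi s := by
    funext R
    rw [intervalIntegral.integral_add_adjacent_intervals (phi_intInt z 1) (phi_intInt 1 R)]
  rw [heq]
  exact tendsto_const_nhds.add (hE 1)

private lemma E0_tail {E0 : ℝ → ℂ}
    (hE : ∀ z : ℝ, Tendsto (fun R : ℝ => ∫ s in z..R, phi s) atTop (nhds (E0 z)))
    {z : ℝ} (hz : 0 < z) : ‖E0 z‖ ≤ 2 / z := by
  refine le_of_tendsto (hE z).norm ?_
  filter_upwards [eventually_ge_atTop z] with R hR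
  exact partial_bound hz hR

private lemma E0_cont {E0 : ℝ → ℂ}
    (hE : ∀ z : ℝ, Tendsto (fun R : ℝ => ∫ s in z..R, phi s) atTop (nhds (E0 z))) :
    Continuous E0 := by
  have h1 : E0 = fun z => (∫ s in z..(1 : ℝ), phi s) + E0 1 := funext (E0_eq hE)
  rw [h1]
  have h2 : Continuous fun z : ℝ => ∫ s in (1 : ℝ)..z, phi s :=
    intervalIntegral.continuous_primitive (fun a b => phi_intInt a b) 1
  have h3 : (fun z : ℝ => ∫ s in z..(1 : ℝ), phi s)
      = fun z : ℝ => -∫ s in (1 : ℝ)..z, phi s := by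
    funext zz; rw [intervalIntegral.integral_symm]
  exact (h3 ▸ h2.neg : Continuous fun z : ℝ => ∫ s in z..(1:ℝ), phi s).add continuous_const

private lemma E0_bound {E0 : ℝ → ℂ}
    (hE : ∀ z : ℝ, Tendsto (fun R : ℝ => ∫ s in z..R, phi s) atTop (nhds (E0 z)))
    {z : ℝ} (hz : 0 < z) : ‖E0 z‖ ≤ 3 * min 1 z⁻¹ := by
  rcases le_or_gt 1 z with h1 | h1
  · have hmin : min 1 z⁻¹ = z⁻¹ := min_eq_right (by
      rw [inv_le_one_iff₀]; right; exact h1)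
    rw [hmin]
    refine (E0_tail hE hz).trans ?_
    rw [div_eq_mul_inv]
    gcongr
    norm_num
  · have hmin : min 1 z⁻¹ = 1 := min_eq_left (by
      rw [le_inv_comm₀ zero_lt_one hz] ; simpa using h1.le)
    rw [hmin, mul_one, E0_eq hE z]
    have hb1 : ‖∫ s in z..(1 : ℝ), phi s‖ ≤ 1 := by
      have := intervalIntegral.norm_integral_le_of_norm_le_const
        (C := 1) (a := z) (b := 1) (f := phi) (fun s _ => (phi_norm s).le)
      calc ‖∫ s in z..(1 : ℝ), phi s‖ ≤ 1 * |1 - z| := this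
        _ ≤ 1 := by rw [one_mul, _root_.abs_of_nonneg (by linarith : (0:ℝ) ≤ 1 - z)]; linarith
    have hb2 : ‖E0 1‖ ≤ 2 := by simpa using E0_tail hE one_pos
    calc ‖(∫ s in z..(1 : ℝ), phi s) + E0 1‖ ≤ ‖∫ s in z..(1 : ℝ), phi s‖ + ‖E0 1‖ :=
          norm_add_le _ _
      _ ≤ 3 := by linarith

end FresnelAux

/-- Let `g ∈ L²(0,∞)` and for `t ≥ 1` let
`E₊(z) = ∫_z^∞ e^{-its²/2} ds = t^{-1/2} E₊⁰(√t z)`, where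
`E₊⁰(z) = ∫_z^∞ e^{-is²/2} ds` is the (improper, Fresnel-type) integral,
i.e. `E₊⁰(z) = lim_{R→∞} ∫_z^R e^{-is²/2} ds`.  Then
`|∫_0^∞ g(z) E₊(z) dz| ≤ C ‖g‖_{L²} t^{-3/4}` for an absolute constant `C`. -/
theorem fresnel_tail_estimate :
    ∃ C : ℝ, 0 < C ∧
      ∀ (t : ℝ), 1 ≤ t →
      ∀ (g : ℝ → ℂ) (E0 : ℝ → ℂ),
        MemLp g 2 (volume.restrict (Ioi (0:ℝ))) →
        (∀ z : ℝ,
          Tendsto (fun R : ℝ => ∫ s in z..R, Complex.exp (-Complex.I * s ^ 2 / 2))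
            atTop (nhds (E0 z))) →
        ‖(∫ z in Ioi (0:ℝ),
              g z * (((Real.sqrt t : ℝ) : ℂ)⁻¹ * E0 (Real.sqrt t * z)))‖ ≤
          C * (eLpNorm g 2 (volume.restrict (Ioi (0:ℝ)))).toReal *
            t ^ (-(3:ℝ)/4) := by
  refine ⟨Real.sqrt 18, Real.sqrt_pos.2 (by norm_num), ?_⟩
  intro t ht g E0 hg hE0
  have ht0 : (0:ℝ) < t := lt_of_lt_of_le one_pos ht
  have hE : ∀ z : ℝ, Tendsto (fun R : ℝ => ∫ s in z..R, phi s) atTop (nhds (E0 z)) := hE0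
  set r := Real.sqrt t with hrdef
  have hr1 : 1 ≤ r := Real.one_le_sqrt.2 ht
  have hr0 : 0 < r := lt_of_lt_of_le one_pos hr1
  have hrsq : r ^ 2 = t := Real.sq_sqrt ht0.le
  have ha0 : 0 < r⁻¹ := inv_pos.2 hr0
  set μ := volume.restrict (Ioi (0:ℝ)) with hμ
  set h : ℝ → ℂ := fun z => ((r : ℝ) : ℂ)⁻¹ * E0 (r * z) with hh
  set ψ : ℝ → ℝ := fun z => 3 * r⁻¹ * min 1 (r * z)⁻¹ with hψ
  set q : ℝ → ℝ := fun z => (min 1 (r * z)⁻¹) ^ 2 with hq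
  -- measurability
  have hhmeas : AEStronglyMeasurable h μ := by
    exact (continuous_const.mul ((E0_cont hE).comp (continuous_const.mul continuous_id))).aestronglyMeasurable
  have hψmeas : AEStronglyMeasurable ψ μ := by
    apply Measurable.aestronglyMeasurable
    exact (measurable_const.min ((measurable_id.const_mul r).inv)).const_mul _
  -- the integral of q
  have hq1eq : EqOn q (fun _ : ℝ => (1:ℝ)) (Ioc 0 r⁻¹) := by
    intro z hz
    have hz0 : 0 < r * z := mul_pos hr0 hz.1
    have hle : r * z ≤ 1 := by
      have := mul_le_mul_of_nonneg_left hz.2 hr0.le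
      rwa [mul_inv_cancel₀ hr0.ne'] at this
    have h1 : (1:ℝ) ≤ (r * z)⁻¹ := (one_le_inv_iff₀).2 ⟨hz0, hle⟩
    show (min 1 (r * z)⁻¹) ^ 2 = 1
    rw [min_eq_left h1, one_pow]
  have hq2eq : EqOn q (fun z : ℝ => t⁻¹ * z ^ (-2 : ℝ)) (Ioi r⁻¹) := by
    intro z hz
    have hz0 : 0 < z := lt_trans ha0 hz
    have hge : 1 ≤ r * z := by
      rw [← mul_inv_cancel₀ hr0.ne']
      exact mul_le_mul_of_nonneg_left (le_of_lt hz) hr0.le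
    have hmin : min 1 (r * z)⁻¹ = (r * z)⁻¹ :=
      min_eq_right (inv_le_one_of_one_le₀ hge)
    have hz2 : z ^ (-2 : ℝ) = (z ^ 2)⁻¹ := by
      rw [Real.rpow_neg hz0.le, show (2:ℝ) = ((2:ℕ):ℝ) by norm_num, Real.rpow_natCast]
    simp only [hq, hmin, hz2]
    rw [mul_inv, ← hrsq]
    ring_nf
  have hq1int : IntegrableOn q (Ioc 0 r⁻¹) volume := by
    refine (IntegrableOn.congr_fun ?_ hq1eq.symm measurableSet_Ioc)
    exact integrableOn_const measure_Ioc_lt_top.ne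
  have hq2int' : IntegrableOn (fun z : ℝ => t⁻¹ * z ^ (-2 : ℝ)) (Ioi r⁻¹) volume :=
    (integrableOn_Ioi_rpow_of_lt (by norm_num) ha0).const_mul t⁻¹
  have hq2int : IntegrableOn q (Ioi r⁻¹) volume :=
    IntegrableOn.congr_fun hq2int' hq2eq.symm measurableSet_Ioi
  have hsplit : Ioc (0:ℝ) r⁻¹ ∪ Ioi r⁻¹ = Ioi (0:ℝ) := Ioc_union_Ioi_eq_Ioi ha0.le
  have hqint : IntegrableOn q (Ioi (0:ℝ)) volume := by
    rw [← hsplit]; exact hq1int.union hq2int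
  have hqval : ∫ z in Ioi (0:ℝ), q z = 2 * r⁻¹ := by
    rw [← hsplit, setIntegral_union (Ioc_disjoint_Ioi le_rfl) measurableSet_Ioi hq1int hq2int]
    have h1 : ∫ z in Ioc (0:ℝ) r⁻¹, q z = r⁻¹ := by
      rw [setIntegral_congr_fun measurableSet_Ioc hq1eq]
      simp [Real.volume_Ioc, ENNReal.toReal_ofReal ha0.le, hr0.le]
    have h2 : ∫ z in Ioi r⁻¹, q z = t⁻¹ * r := by
      rw [setIntegral_congr_fun measurableSet_Ioi hq2eq, integral_const_mul,
        integral_Ioi_rpow_of_lt (by norm_num) ha0]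
      rw [show (-2:ℝ) + 1 = -1 by norm_num, Real.rpow_neg_one, inv_inv]
      ring
    rw [h1, h2]
    have : t⁻¹ * r = r⁻¹ := by
      rw [← hrsq]; field_simp
    rw [this]; ring
  -- ψ² facts
  have hψsq : ∀ z : ℝ, ψ z ^ 2 = 9 * r⁻¹ ^ 2 * q z := by
    intro z; simp only [hψ, hq]; ring
  have hψ2int : Integrable (fun z => ψ z ^ 2) μ := by
    rw [hμ]
    have : (fun z => ψ z ^ 2) = fun z => 9 * r⁻¹ ^ 2 * q z := funext hψsq
    rw [this]
    exact hqint.const_mul _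
  have hψ2val : ∫ z, ψ z ^ 2 ∂μ = 18 * r⁻¹ ^ 3 := by
    rw [hμ]
    calc ∫ z in Ioi (0:ℝ), ψ z ^ 2 = ∫ z in Ioi (0:ℝ), 9 * r⁻¹ ^ 2 * q z := by
          exact integral_congr_ae (Eventually.of_forall fun z => hψsq z)
      _ = 9 * r⁻¹ ^ 2 * ∫ z in Ioi (0:ℝ), q z := integral_const_mul _ _
      _ = 18 * r⁻¹ ^ 3 := by rw [hqval]; ring
  have hψL2 : MemLp ψ 2 μ := (memLp_two_iff_integrable_sq hψmeas).2 hψ2int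
  -- pointwise bound
  have hbound : ∀ z ∈ Ioi (0:ℝ), ‖h z‖ ≤ ψ z := by
    intro z hz
    have hz0 : (0:ℝ) < z := hz
    have hrz : 0 < r * z := mul_pos hr0 hz0
    have : ‖h z‖ = r⁻¹ * ‖E0 (r * z)‖ := by
      rw [hh]
      simp only [norm_mul, norm_inv, Complex.norm_real, Real.norm_of_nonneg hr0.le]
    rw [this, hψ]
    have := E0_bound hE hrz
    calc r⁻¹ * ‖E0 (r * z)‖ ≤ r⁻¹ * (3 * min 1 (r * z)⁻¹) := by
          exact mul_le_mul_of_nonneg_left this ha0.le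
      _ = 3 * r⁻¹ * min 1 (r * z)⁻¹ := by ring
  have haeb : ∀ᵐ z ∂μ, ‖h z‖ ≤ ‖ψ z‖ := by
    rw [hμ, ae_restrict_iff' measurableSet_Ioi]
    refine Eventually.of_forall fun z hz => (hbound z hz).trans ?_
    exact le_abs_self _
  have hhL2 : MemLp h 2 μ := MemLp.of_le hψL2 hhmeas haeb
  -- Hölder
  have hconj : (2:ℝ).HolderConjugate 2 := Real.HolderConjugate.two_two
  have h2eq : ENNReal.ofReal (2:ℝ) = 2 := by norm_num
  have hg' : MemLp g (ENNReal.ofReal (2:ℝ)) μ := by rw [h2eq]; exact hg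
  have hh' : MemLp h (ENNReal.ofReal (2:ℝ)) μ := by rw [h2eq]; exact hhL2
  have hHolder := integral_mul_norm_le_Lp_mul_Lq hconj hg' hh'
  -- identify the eLpNorm
  have hGnn : 0 ≤ ∫ z, ‖g z‖ ^ (2:ℝ) ∂μ :=
    integral_nonneg fun z => Real.rpow_nonneg (norm_nonneg _) _
  have hA : (∫ z, ‖g z‖ ^ (2:ℝ) ∂μ) ^ (1/(2:ℝ)) = (eLpNorm g 2 μ).toReal := by
    rw [hg.eLpNorm_eq_integral_rpow_norm two_ne_zero ENNReal.ofNat_ne_top]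
    rw [ENNReal.toReal_ofReal (Real.rpow_nonneg (by simpa using hGnn) _)]
    norm_num
  -- bound the h factor
  have hrpow2 : ∀ x : ℝ, 0 ≤ x → x ^ (2:ℝ) = x ^ 2 := fun x hx => by
    rw [show (2:ℝ) = ((2:ℕ):ℝ) by norm_num, Real.rpow_natCast]
  have hBle : ∫ z, ‖h z‖ ^ (2:ℝ) ∂μ ≤ 18 * r⁻¹ ^ 3 := by
    rw [← hψ2val]
    refine integral_mono_of_nonneg
      (Eventually.of_forall fun z => Real.rpow_nonneg (norm_nonneg _) _) hψ2int ?_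
    filter_upwards [haeb] with z hz
    rw [hrpow2 _ (norm_nonneg _)]
    calc ‖h z‖ ^ 2 ≤ ‖ψ z‖ ^ 2 := pow_le_pow_left₀ (norm_nonneg _) hz 2
      _ = ψ z ^ 2 := by rw [Real.norm_eq_abs, _root_.sq_abs]
  have hr3 : 18 * r⁻¹ ^ 3 = 18 * t ^ (-(3:ℝ)/2) := by
    rw [hrdef, Real.sqrt_eq_rpow, ← Real.rpow_neg ht0.le, ← Real.rpow_natCast (t ^ (-(1/(2:ℝ)))) 3,
      ← Real.rpow_mul ht0.le]
    norm_num
  have hBnn : 0 ≤ ∫ z, ‖h z‖ ^ (2:ℝ) ∂μ :=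
    integral_nonneg fun z => Real.rpow_nonneg (norm_nonneg _) _
  have hB : (∫ z, ‖h z‖ ^ (2:ℝ) ∂μ) ^ (1/(2:ℝ)) ≤ Real.sqrt 18 * t ^ (-(3:ℝ)/4) := by
    calc (∫ z, ‖h z‖ ^ (2:ℝ) ∂μ) ^ (1/(2:ℝ))
        ≤ (18 * t ^ (-(3:ℝ)/2)) ^ (1/(2:ℝ)) := by
          apply Real.rpow_le_rpow hBnn (hr3 ▸ hBle)
          norm_num
      _ = Real.sqrt 18 * t ^ (-(3:ℝ)/4) := by
          rw [Real.mul_rpow (by norm_num) (Real.rpow_nonneg ht0.le _),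
            ← Real.rpow_mul ht0.le, Real.sqrt_eq_rpow]
          norm_num
  -- put everything together
  have hgoal : ‖∫ z in Ioi (0:ℝ), g z * h z‖
      ≤ (eLpNorm g 2 μ).toReal * (Real.sqrt 18 * t ^ (-(3:ℝ)/4)) := by
    calc ‖∫ z in Ioi (0:ℝ), g z * h z‖ ≤ ∫ z, ‖g z * h z‖ ∂μ := by
          rw [hμ]; exact norm_integral_le_integral_norm _
      _ = ∫ z, ‖g z‖ * ‖h z‖ ∂μ := by simp_rw [norm_mul]
      _ ≤ (∫ z, ‖g z‖ ^ (2:ℝ) ∂μ) ^ (1/(2:ℝ)) * (∫ z, ‖h z‖ ^ (2:ℝ) ∂μ) ^ (1/(2:ℝ)) := hHolder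
      _ ≤ (eLpNorm g 2 μ).toReal * (Real.sqrt 18 * t ^ (-(3:ℝ)/4)) := by
          rw [← hA]
          exact mul_le_mul_of_nonneg_left hB (Real.rpow_nonneg hGnn _)
  calc ‖∫ z in Ioi (0:ℝ), g z * (((r : ℝ) : ℂ)⁻¹ * E0 (r * z))‖
      = ‖∫ z in Ioi (0:ℝ), g z * h z‖ := rfl
    _ ≤ (eLpNorm g 2 μ).toReal * (Real.sqrt 18 * t ^ (-(3:ℝ)/4)) := hgoal
    _ = Real.sqrt 18 * (eLpNorm g 2 μ).toReal * t ^ (-(3:ℝ)/4) := by ring
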